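/- For every co-safety LTL formula φ over a finite set of propositions P, there exists a deterministic finite automaton over the alphabet 2^P that accepts exactly the nonempty finite words u = u_0 u_1 ... u_n such that the finite trace segment u_{0,n} satisfies φ. -/

import Mathlib

/-! ## Flagging monitors -/

/-- A flagging monitor over an event alphabet `E`: a finite set of states with
an initial state, flagging states (not containing the initial state nor the sink),
a sink state, a set of typed variables represented by a type of valuations `Val`
with an initial valuation, and a deterministic guarded transition function whose
sources are non-sink states. -/
structure FlaggingMonitor (E : Type) where
  State : Type
  Val : Type
  finState : Finite State
  init : State
  v0 : Val
  Flag : Set State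
  sink : State
  init_notin_flag : init ∉ Flag
  sink_notin_flag : sink ∉ Flag
  trans : Set (State × (E → Val → Prop) × (E → Val → Val) × State)
  src_ne_sink : ∀ t ∈ trans, t.1 ≠ sink
  det : ∀ t ∈ trans, ∀ t' ∈ trans, t.1 = t'.1 →
          ∀ e v, t.2.1 e v → t'.2.1 e v → t = t'

namespace FlaggingMonitor

variable {E : Type}

/-- One step of the operational semantics of a flagging monitor, on
configurations (state, valuation), labelled by events:
(1) a guarded transition from a non-flagging non-sink state whose guard holds;
(2) stuttering in a non-flagging non-sink state when no guard holds;
(3) the sink configuration cannot be left;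
(4) a flagging configuration always moves to the sink. -/
inductive Step (M : FlaggingMonitor E) :
    M.State × M.Val → E → M.State × M.Val → Prop
  | trans {q : M.State} {g : E → M.Val → Prop} {a : E → M.Val → M.Val}
      {q' : M.State} {e : E} {v : M.Val} :
      q ∉ M.Flag → q ≠ M.sink → (q, g, a, q') ∈ M.trans → g e v →
      Step M (q, v) e (q', a e v)
  | stutter {q : M.State} {e : E} {v : M.Val} :
      q ∉ M.Flag → q ≠ M.sink →
      (∀ g a q', (q, g, a, q') ∈ M.trans → ¬ g e v) →
      Step M (q, v) e (q, v)
  | sink {e : E} {v : M.Val} : Step M (M.sink, v) e (M.sink, v)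
  | flag {q : M.State} {e : E} {v : M.Val} :
      q ∈ M.Flag → Step M (q, v) e (M.sink, v)

/-- Extension of the step relation along a finite sequence of events. -/
def Steps (M : FlaggingMonitor E) :
    M.State × M.Val → List E → M.State × M.Val → Prop
  | c, [], c' => c' = c
  | c, e :: es, c' => ∃ c'', Step M c e c'' ∧ Steps M c'' es c'

end FlaggingMonitor

/-- The segment `σ_{i,j}` of an infinite trace, as the list of events at
positions `i, i+1, …, j`. -/
def seg {E : Type} (σ : ℕ → E) (i j : ℕ) : List E :=
  (List.range (j + 1 - i)).map fun k => σ (i + k)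

/-- `σ_{i,j} ⊩ D`: the segment `σ_{i,j}` flags the monitor `D`, i.e. running `D`
from its initial configuration along `σ_{i,j}` reaches a flagging state. -/
def Flags {E : Type} (D : FlaggingMonitor E) (σ : ℕ → E) (i j : ℕ) : Prop :=
  ∃ q v, q ∈ D.Flag ∧ D.Steps (D.init, D.v0) (seg σ i j) (q, v)

/-- The monitor `D_⟨*⟩` that flags on every event: states `q0 = 0`, `q_F = 1`,
`⊥ = 2`, with a single transition from `q0` to `q_F` with guard true and null
action. -/
def starMonitor (E : Type) : FlaggingMonitor E where
  State := Fin 3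
  Val := Unit
  finState := inferInstance
  init := 0
  v0 := ()
  Flag := {1}
  sink := 2
  init_notin_flag := by simp
  sink_notin_flag := by simp
  trans := {(0, fun _ _ => True, fun _ v => v, 1)}
  src_ne_sink := by
    rintro t ht
    simp only [Set.mem_singleton_iff] at ht
    subst ht
    simp
  det := by
    rintro t ht t' ht' _ _ _ _ _
    simp only [Set.mem_singleton_iff] at ht ht'
    rw [ht, ht']

/-! ## LTL -/

/-- LTL formulas over propositions `P`, with negation applied only to
propositions. -/
inductive LTL (P : Type) : Type
  | tt : LTL P
  | ff : LTL P
  | atom : P → LTL P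
  | natom : P → LTL P
  | and : LTL P → LTL P → LTL P
  | or : LTL P → LTL P → LTL P
  | next : LTL P → LTL P
  | untl : LTL P → LTL P → LTL P
  | glob : LTL P → LTL P

/-- Satisfaction `σ_{i,j} ⊨ φ` of an LTL formula on the segment of the infinite
trace `σ` from position `i` to position `j` (where `j : ℕ∞` may be `∞`). -/
def Sat {P : Type} (σ : ℕ → Set P) : LTL P → ℕ → ℕ∞ → Prop
  | .tt, _, _ => True
  | .ff, _, _ => False
  | .atom e, i, _ => e ∈ σ i
  | .natom e, i, _ => e ∉ σ i
  | .and φ ψ, i, j => Sat σ φ i j ∧ Sat σ ψ i j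
  | .or φ ψ, i, j => Sat σ φ i j ∨ Sat σ ψ i j
  | .next φ, i, j => (i : ℕ∞) < j ∧ Sat σ φ (i + 1) j
  | .untl φ ψ, i, j => ∃ l : ℕ, (l : ℕ∞) ≤ j ∧ Sat σ ψ l ⊤ ∧
      ∀ k, i ≤ k → k < l → Sat σ φ k j
  | .glob φ, i, j => j = ⊤ ∧ ∀ k, i ≤ k → Sat σ φ k j

/-- Co-safety LTL formulas: those built without `G`. -/
inductive CoSafe {P : Type} : LTL P → Prop
  | tt : CoSafe .tt
  | ff : CoSafe .ff
  | atom (e : P) : CoSafe (.atom e)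
  | natom (e : P) : CoSafe (.natom e)
  | and {φ ψ : LTL P} : CoSafe φ → CoSafe ψ → CoSafe (.and φ ψ)
  | or {φ ψ : LTL P} : CoSafe φ → CoSafe ψ → CoSafe (.or φ ψ)
  | next {φ : LTL P} : CoSafe φ → CoSafe (.next φ)
  | untl {φ ψ : LTL P} : CoSafe φ → CoSafe ψ → CoSafe (.untl φ ψ)

/-- Tight satisfaction `σ_{i,j} ⊩ φ` of a (co-safety) LTL formula on a finite
segment: the segment satisfies `φ` and no strict prefix of it does. -/
def TightSat {P : Type} (σ : ℕ → Set P) (φ : LTL P) (i j : ℕ) : Prop :=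
  Sat σ φ i j ∧ ∀ k, i ≤ k → k < j → ¬ Sat σ φ i k

/-! ## Monitor-triggered temporal logic -/

/-- The suffix of a trace starting at position `n`, viewed as a trace starting
at position `0`. -/
def shiftTrace {E : Type} (σ : ℕ → E) (n : ℕ) : ℕ → E := fun k => σ (k + n)

/-- `σ_{i,∞} ⊨ D:φ`: simple-trigger satisfaction. -/
def TrigSat {P : Type} (D : FlaggingMonitor (Set P)) (φ : LTL P)
    (σ : ℕ → Set P) (i : ℕ) : Prop :=
  ∃ j, i ≤ j ∧ (Flags D σ i j → Sat σ φ j ⊤)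

/-- `σ_{i,k} ⊨ D;φ`: one step of a repeating trigger, for co-safety `φ`. -/
def SeqSat {P : Type} (D : FlaggingMonitor (Set P)) (φ : LTL P)
    (σ : ℕ → Set P) (i k : ℕ) : Prop :=
  ∃ j, i ≤ j ∧ j ≤ k ∧ Flags D σ i j ∧ TightSat σ φ j k

/-- `σ ⊨ (D;φ)*`: repeating-trigger satisfaction, as a greatest fixpoint: there
is a set of traces containing `σ`, each member `τ` of which satisfies: for all
`i`, if `τ_{0,i} ⊩ D` then there is `j ≥ i` with `τ_{0,j} ⊨ D;φ` and the suffix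
`τ_{j+1,∞}` again a member of the set. -/
def RepSat {P : Type} (D : FlaggingMonitor (Set P)) (φ : LTL P)
    (σ : ℕ → Set P) : Prop :=
  ∃ R : (ℕ → Set P) → Prop, R σ ∧
    ∀ τ, R τ → ∀ i, Flags D τ 0 i →
      ∃ j, i ≤ j ∧ SeqSat D φ τ 0 j ∧ R (shiftTrace τ (j + 1))

/-! ## Mealy machines and realisability -/

/-- A Mealy machine with input alphabet `I` and output alphabet `O`: states with
an initial state, a complete deterministic transition function, and accepting
states. -/
structure Mealy (I O : Type) where
  S : Type
  s0 : S
  trans : S → I → O × S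
  acc : Set S

/-- The state of a Mealy machine after reading the first `n` inputs of `inp`. -/
def Mealy.run {I O : Type} (C : Mealy I O) (inp : ℕ → I) : ℕ → C.S
  | 0 => C.s0
  | n + 1 => (C.trans (Mealy.run C inp n) (inp n)).2

/-- The output of a Mealy machine at step `n` on the input stream `inp`. -/
def Mealy.out {I O : Type} (C : Mealy I O) (inp : ℕ → I) (n : ℕ) : O :=
  (C.trans (C.run inp n) (inp n)).1

/-- The word over `2^(P_in ∪ P_out)` produced by the run of `C` on the input
stream `inp`: at each step the union of the input and the output events. -/
def mword {Pin Pout : Type} (C : Mealy (Set Pin) (Set Pout))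
    (inp : ℕ → Set Pin) : ℕ → Set (Pin ⊕ Pout) :=
  fun n => Sum.inl '' inp n ∪ Sum.inr '' C.out inp n

/-- `C` produces the word `w`. -/
def Produced {Pin Pout : Type} (C : Mealy (Set Pin) (Set Pout))
    (w : ℕ → Set (Pin ⊕ Pout)) : Prop :=
  ∃ inp : ℕ → Set Pin, w = mword C inp

/-- `C` realises `γ → φ`: every word produced by `C` that satisfies `γ` also
satisfies `φ`. -/
def RealisesImp {Pin Pout : Type} (C : Mealy (Set Pin) (Set Pout))
    (γ φ : LTL (Pin ⊕ Pout)) : Prop :=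
  ∀ w, Produced C w → Sat w γ 0 ⊤ → Sat w φ 0 ⊤

/-- `C` tightly realises `γ → φ` (for co-safety `φ`): it realises `γ → φ` and,
for every produced word satisfying `γ`, some prefix of the word is accepted by
`C`, tightly satisfies `φ`, and no strict prefix of it is accepted. -/
def TightlyRealises {Pin Pout : Type} (C : Mealy (Set Pin) (Set Pout))
    (γ φ : LTL (Pin ⊕ Pout)) : Prop :=
  RealisesImp C γ φ ∧
  ∀ inp : ℕ → Set Pin, Sat (mword C inp) γ 0 ⊤ →
    ∃ n, C.run inp (n + 1) ∈ C.acc ∧ TightSat (mword C inp) φ 0 n ∧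
      ∀ m, m ≤ n → C.run inp m ∉ C.acc

/-! ## Assumption formulas -/

/-- Boolean combinations of propositions (in negation normal form). -/
inductive IsAlpha {P : Type} : LTL P → Prop
  | tt : IsAlpha .tt
  | ff : IsAlpha .ff
  | atom (e : P) : IsAlpha (.atom e)
  | natom (e : P) : IsAlpha (.natom e)
  | and {φ ψ : LTL P} : IsAlpha φ → IsAlpha ψ → IsAlpha (.and φ ψ)
  | or {φ ψ : LTL P} : IsAlpha φ → IsAlpha ψ → IsAlpha (.or φ ψ)

/-- Formulas built from Boolean formulas and un-nested `X` by `∧` and `∨`. -/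
inductive IsBeta {P : Type} : LTL P → Prop
  | base {φ : LTL P} : IsAlpha φ → IsBeta φ
  | next {φ : LTL P} : IsAlpha φ → IsBeta (.next φ)
  | and {φ ψ : LTL P} : IsBeta φ → IsBeta ψ → IsBeta (.and φ ψ)
  | or {φ ψ : LTL P} : IsBeta φ → IsBeta ψ → IsBeta (.or φ ψ)

/-- Assumption formulas: conjunctions of invariants `G β` and recurrence
formulas `G F α` (where `F α = tt U α`). -/
inductive IsAssumption {P : Type} : LTL P → Prop
  | inv {β : LTL P} : IsBeta β → IsAssumption (.glob β)
  | recur {α : LTL P} : IsAlpha α → IsAssumption (.glob (.untl .tt α))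
  | and {γ γ' : LTL P} : IsAssumption γ → IsAssumption γ' →
      IsAssumption (.and γ γ')

/-! ## Triggers over combined input/output propositions -/

/-- The projection of a trace over `P_in ∪ P_out` onto `P_in`. -/
def projIn {Pin Pout : Type} (w : ℕ → Set (Pin ⊕ Pout)) : ℕ → Set Pin :=
  fun n => {x | Sum.inl x ∈ w n}

/-- `w_{i,∞} ⊨ M:φ`, where the monitor reads the projection of `w` onto the
input propositions. -/
def TrigSatP {Pin Pout : Type} (M : FlaggingMonitor (Set Pin))
    (φ : LTL (Pin ⊕ Pout)) (w : ℕ → Set (Pin ⊕ Pout)) (i : ℕ) : Prop :=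
  ∃ j, i ≤ j ∧ (Flags M (projIn w) i j → Sat w φ j ⊤)

/-- `w_{i,k} ⊨ M;φ`, where the monitor reads the projection of `w` onto the
input propositions. -/
def SeqSatP {Pin Pout : Type} (M : FlaggingMonitor (Set Pin))
    (φ : LTL (Pin ⊕ Pout)) (w : ℕ → Set (Pin ⊕ Pout)) (i k : ℕ) : Prop :=
  ∃ j, i ≤ j ∧ j ≤ k ∧ Flags M (projIn w) i j ∧ TightSat w φ j k

/-- `w ⊨ (M;φ)*`, where the monitor reads the projection of `w` onto the input
propositions (greatest fixpoint, as in `RepSat`). -/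
def RepSatP {Pin Pout : Type} (M : FlaggingMonitor (Set Pin))
    (φ : LTL (Pin ⊕ Pout)) (w : ℕ → Set (Pin ⊕ Pout)) : Prop :=
  ∃ R : (ℕ → Set (Pin ⊕ Pout)) → Prop, R w ∧
    ∀ τ, R τ → ∀ i, Flags M (projIn τ) 0 i →
      ∃ j, i ≤ j ∧ SeqSatP M φ τ 0 j ∧ R (shiftTrace τ (j + 1))

/-- A nonempty finite word `u = u_0 … u_n` over `2^P`, viewed as the finite
trace segment `u_{0,n}` (of the trace obtained by extending `u` with `∅`). -/
def wordTrace {P : Type} (u : List (Set P)) : ℕ → Set P :=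
  fun k => u.getD k ∅


/-! ### Auxiliary development for Statement 9 -/

set_option maxHeartbeats 1000000

/-! Auxiliary DFA-like machines over marked alphabets. -/

structure DA (A : Type) where
  Q : Type
  fin : Finite Q
  q0 : Q
  δ : Q → A → Q
  Acc : Set Q

namespace DA

variable {A : Type}

def run (M : DA A) (w : List A) : M.Q := w.foldl M.δ M.q0

def Accepts (M : DA A) (w : List A) : Prop := M.run w ∈ M.Acc

@[simp] lemma run_nil (M : DA A) : M.run [] = M.q0 := rfl

lemma run_append (M : DA A) (w : List A) (x : A) :
    M.run (w ++ [x]) = M.δ (M.run w) x := by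
  simp [run, List.foldl_append]

end DA

/-- Mark a word from position `i` on. -/
def markFrom {P : Type} (u : List (Set P)) (i : ℕ) : List (Set P × Bool) :=
  (u.take i).map (fun a => (a, false)) ++ (u.drop i).map (fun a => (a, true))

lemma markFrom_of_ge {P : Type} (u : List (Set P)) (i : ℕ) (h : u.length ≤ i) :
    markFrom u i = u.map (fun a => (a, false)) := by
  simp [markFrom, List.take_of_length_le h, List.drop_eq_nil_of_le h]

@[simp] lemma markFrom_nil {P : Type} (i : ℕ) : markFrom ([] : List (Set P)) i = [] := by
  simp [markFrom]

lemma markFrom_append {P : Type} (u : List (Set P)) (a : Set P) (i : ℕ) :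
    markFrom (u ++ [a]) i = markFrom u i ++ [(a, decide (i ≤ u.length))] := by
  by_cases h : i ≤ u.length
  · simp only [markFrom, List.take_append_of_le_length h, List.drop_append_of_le_length h,
      List.map_append, decide_eq_true h]
    simp
  · push_neg at h
    rw [markFrom_of_ge _ _ (by simp only [List.length_append, List.length_singleton]; omega), markFrom_of_ge _ _ (by omega)]
    simp [h, Nat.not_le.mpr h]

/-! ### Machine combinators -/

variable {P : Type}

def daTrue (A : Type) : DA A := ⟨Unit, inferInstance, (), fun q _ => q, Set.univ⟩

def daFalse (A : Type) : DA A := ⟨Unit, inferInstance, (), fun q _ => q, ∅⟩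

@[simp] lemma daTrue_accepts {A : Type} (w : List A) : (daTrue A).Accepts w := by
  simp [daTrue, DA.Accepts]
  exact Set.mem_univ _

@[simp] lemma daFalse_accepts {A : Type} (w : List A) : ¬ (daFalse A).Accepts w := by
  simp [daFalse, DA.Accepts]
  exact fun h => h

/-- Machine for atomic propositions (mark position tells where to test). -/
def daAtom (e : P) (pos : Bool) : DA (Set P × Bool) where
  Q := Option Prop
  fin := inferInstance
  q0 := none
  δ := fun q x => match q with
    | none => if x.2 then some (e ∈ x.1) else none
    | some p => some p
  Acc := if pos then {q | ∃ p, q = some p ∧ p} else {q | ∀ p, q = some p → ¬ p}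

lemma daAtom_run (e : P) (pos : Bool) (u : List (Set P)) (i : ℕ) :
    (daAtom e pos).run (markFrom u i)
      = if i < u.length then some (e ∈ u.getD i ∅) else none := by
  induction u using List.reverseRecOn generalizing i with
  | nil => simp [markFrom, DA.run, daAtom]
  | append_singleton u a ih =>
    rw [markFrom_append, DA.run_append, ih]
    by_cases h : i < u.length
    · have h2 : i < (u ++ [a]).length := by simp; omega
      have h3 : i ≤ u.length := le_of_lt h
      simp only [if_pos h, if_pos h2, daAtom]
      have : (u ++ [a]).getD i ∅ = u.getD i ∅ := by
        rw [List.getD_eq_getElem u ∅ h, List.getD_eq_getElem _ ∅ h2]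
        exact List.getElem_append_left h
      rw [this]
    · by_cases h' : i ≤ u.length
      · have hi : i = u.length := by omega
        have h2 : i < (u ++ [a]).length := by simp; omega
        simp only [if_neg h, if_pos h2, daAtom, decide_eq_true h']
        have : (u ++ [a]).getD i ∅ = a := by
          rw [List.getD_eq_getElem _ ∅ h2]
          subst hi
          simp
        rw [this]
        rfl
      · have h2 : ¬ i < (u ++ [a]).length := by simp; omega
        simp only [if_neg h, if_neg h2, daAtom, decide_eq_false h']
        rfl

/-- Product machines. -/
def daProd (M N : DA P) (isAnd : Bool) : DA P where
  Q := M.Q × N.Q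
  fin := by have := M.fin; have := N.fin; infer_instance
  q0 := (M.q0, N.q0)
  δ := fun q a => (M.δ q.1 a, N.δ q.2 a)
  Acc := if isAnd then {q | q.1 ∈ M.Acc ∧ q.2 ∈ N.Acc} else {q | q.1 ∈ M.Acc ∨ q.2 ∈ N.Acc}

lemma daProd_run (M N : DA P) (isAnd : Bool) (w : List P) :
    (daProd M N isAnd).run w = (M.run w, N.run w) := by
  induction w using List.reverseRecOn with
  | nil => rfl
  | append_singleton w x ih => rw [DA.run_append, DA.run_append, DA.run_append, ih]; rfl

/-- Machine for `next`: delay the first mark by one position. -/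
def daNext (M : DA (Set P × Bool)) (isFin : Bool) : DA (Set P × Bool) where
  Q := M.Q × Bool × Bool
  fin := by have := M.fin; infer_instance
  q0 := (M.q0, false, false)
  δ := fun q x => (M.δ q.1 (x.1, x.2 && q.2.1), q.2.1 || x.2, q.2.2 || (q.2.1 && x.2))
  Acc := if isFin then {q | q.1 ∈ M.Acc ∧ q.2.2 = true} else {q | q.1 ∈ M.Acc}

lemma daNext_run (M : DA (Set P × Bool)) (isFin : Bool) (u : List (Set P)) (i : ℕ) :
    (daNext M isFin).run (markFrom u i)
      = (M.run (markFrom u (i + 1)), decide (i < u.length), decide (i + 1 < u.length)) := by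
  induction u using List.reverseRecOn generalizing i with
  | nil => simp [markFrom, DA.run, daNext]
  | append_singleton u a ih =>
    rw [markFrom_append, DA.run_append, ih, markFrom_append]
    simp only [daNext, DA.run_append, List.length_append, List.length_singleton]
    have b3 : (decide (i ≤ u.length) && decide (i < u.length)) = decide (i + 1 ≤ u.length) := by
      simp only [← Bool.decide_and, decide_eq_decide]; omega
    have b1 : (decide (i < u.length) || decide (i ≤ u.length)) = decide (i < u.length + 1) := by
      simp only [← Bool.decide_or, decide_eq_decide]; omega
    have b2 : (decide (i + 1 < u.length) || decide (i < u.length) && decide (i ≤ u.length))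
        = decide (i + 1 < u.length + 1) := by
      simp only [← Bool.decide_and, ← Bool.decide_or, decide_eq_decide]; omega
    rw [b3, b1, b2]

lemma daProd_accepts (M N : DA P) (b : Bool) (w : List P) :
    (daProd M N b).Accepts w ↔
      (if b then M.Accepts w ∧ N.Accepts w else M.Accepts w ∨ N.Accepts w) := by
  rw [DA.Accepts, daProd_run]
  show (M.run w, N.run w) ∈ (daProd M N b).Acc ↔ _
  cases b <;> simp [daProd, DA.Accepts] <;> exact Iff.rfl

lemma daNext_accepts {P : Type} (M : DA (Set P × Bool)) (isFin : Bool) (u : List (Set P)) (i : ℕ) :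
    (daNext M isFin).Accepts (markFrom u i) ↔
      (M.Accepts (markFrom u (i + 1)) ∧ (isFin = true → i + 1 < u.length)) := by
  rw [DA.Accepts, daNext_run]
  show _ ∈ (daNext M isFin).Acc ↔ _
  cases isFin <;> simp [daNext, DA.Accepts]
  · exact Iff.rfl
  · show _ ∧ _ ↔ _
    simp

/-- Machine for `until`. -/
def daUntil (Mφ Mψ : DA (Set P × Bool)) (incl : Bool) : DA (Set P × Bool) where
  Q := Mφ.Q × Mψ.Q × Set Mφ.Q × Set (Set Mφ.Q × Mψ.Q)
  fin := by have := Mφ.fin; have := Mψ.fin; infer_instance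
  q0 := (Mφ.q0, Mψ.q0, ∅, ∅)
  δ := fun x y =>
    (Mφ.δ x.1 (y.1, false), Mψ.δ x.2.1 (y.1, false),
     (fun q => Mφ.δ q (y.1, true)) '' x.2.2.1 ∪ (if y.2 then {Mφ.δ x.1 (y.1, true)} else ∅),
     (fun z => ((fun q => Mφ.δ q (y.1, true)) '' z.1, Mψ.δ z.2 (y.1, true))) '' x.2.2.2 ∪
       {((fun q => Mφ.δ q (y.1, true)) '' x.2.2.1, Mψ.δ x.2.1 (y.1, true))})
  Acc := {x | (∃ z ∈ x.2.2.2, z.1 ⊆ Mφ.Acc ∧ z.2 ∈ Mψ.Acc) ∨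
              (incl = true ∧ x.2.2.1 ⊆ Mφ.Acc ∧ x.2.1 ∈ Mψ.Acc)}

lemma daUntil_run (Mφ Mψ : DA (Set P × Bool)) (incl : Bool) (u : List (Set P)) (i : ℕ) :
    (daUntil Mφ Mψ incl).run (markFrom u i)
      = (Mφ.run (markFrom u u.length), Mψ.run (markFrom u u.length),
         (fun k => Mφ.run (markFrom u k)) '' {k | i ≤ k ∧ k < u.length},
         (fun l => ((fun k => Mφ.run (markFrom u k)) '' {k | i ≤ k ∧ k < l},
                    Mψ.run (markFrom u l))) '' {l | l < u.length}) := by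
  induction u using List.reverseRecOn generalizing i with
  | nil =>
    simp only [markFrom_nil, DA.run_nil, List.length_nil]
    have h1 : {k | i ≤ k ∧ k < 0} = (∅ : Set ℕ) := by ext k; simp
    have h2 : {l | l < 0} = (∅ : Set ℕ) := by ext l; simp
    rw [h1, h2]
    simp [daUntil]
  | append_singleton u a ih =>
    have hlen : (u ++ [a]).length = u.length + 1 := by simp
    have hmk : ∀ k : ℕ, k ≤ u.length →
        markFrom (u ++ [a]) k = markFrom u k ++ [(a, true)] := by
      intro k hk
      rw [markFrom_append, decide_eq_true hk]
    have hφ1 : ∀ k : ℕ, k ≤ u.length →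
        Mφ.run (markFrom (u ++ [a]) k) = Mφ.δ (Mφ.run (markFrom u k)) (a, true) := by
      intro k hk; rw [hmk k hk, DA.run_append]
    have hψ1 : ∀ k : ℕ, k ≤ u.length →
        Mψ.run (markFrom (u ++ [a]) k) = Mψ.δ (Mψ.run (markFrom u k)) (a, true) := by
      intro k hk; rw [hmk k hk, DA.run_append]
    have hmk0 : markFrom (u ++ [a]) (u.length + 1) = markFrom u u.length ++ [(a, false)] := by
      rw [markFrom_append, markFrom_of_ge u (u.length + 1) (by omega),
        ← markFrom_of_ge u u.length le_rfl, decide_eq_false (by omega)]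
    have hφ0 : Mφ.run (markFrom (u ++ [a]) (u.length + 1))
        = Mφ.δ (Mφ.run (markFrom u u.length)) (a, false) := by
      rw [hmk0, DA.run_append]
    have hψ0 : Mψ.run (markFrom (u ++ [a]) (u.length + 1))
        = Mψ.δ (Mψ.run (markFrom u u.length)) (a, false) := by
      rw [hmk0, DA.run_append]
    rw [markFrom_append, DA.run_append, ih]
    simp only [daUntil, hlen]
    refine Prod.ext ?_ (Prod.ext ?_ (Prod.ext ?_ ?_))
    · exact (hφ0).symm
    · exact (hψ0).symm
    · -- the A component
      simp only [Set.image_image]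
      by_cases hi : i ≤ u.length
      · have hS : {k | i ≤ k ∧ k < u.length + 1}
            = {k | i ≤ k ∧ k < u.length} ∪ {u.length} := by
          ext k; simp only [Set.mem_setOf_eq, Set.mem_union, Set.mem_singleton_iff]; omega
        rw [decide_eq_true hi, if_pos rfl, hS, Set.image_union, Set.image_singleton]
        congr 1
        exact Set.image_congr fun k hk => (hφ1 k (le_of_lt hk.2)).symm
        rw [hφ1 u.length le_rfl]
      · have h1 : {k | i ≤ k ∧ k < u.length} = (∅ : Set ℕ) := by
          ext k; simp only [Set.mem_setOf_eq]; simp; omega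
        have h2 : {k | i ≤ k ∧ k < u.length + 1} = (∅ : Set ℕ) := by
          ext k; simp only [Set.mem_setOf_eq]; simp; omega
        rw [decide_eq_false hi, if_neg (by simp), h1, h2]
        simp
    · -- the C component
      simp only [Set.image_image]
      have hS : {l | l < u.length + 1} = {l | l < u.length} ∪ {u.length} := by
        ext l; simp only [Set.mem_setOf_eq, Set.mem_union, Set.mem_singleton_iff]; omega
      rw [hS, Set.image_union, Set.image_singleton]
      congr 1
      · refine Set.image_congr fun l hl => ?_
        have hl' : l < u.length := hl
        refine Prod.ext ?_ ?_
        · simp only [Set.image_image]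
          exact (Set.image_congr fun k hk => (hφ1 k (by have := hk.2; omega)).symm)
        · exact (hψ1 l (by omega)).symm
      · refine congrArg _ (Prod.ext ?_ ?_)
        · simp only [Set.image_image]
          exact (Set.image_congr fun k hk => (hφ1 k (le_of_lt hk.2)).symm)
        · exact (hψ1 u.length le_rfl).symm


/-! ### Semantic lemmas -/

/-- On a trace that is constant from `m` on, satisfaction at `⊤` does not
depend on the position, once past `m`. -/
lemma sat_const {P : Type} (χ : LTL P) (σ : ℕ → Set P) (m : ℕ)
    (hσ : ∀ k, m ≤ k → σ k = σ m) :
    ∀ l l', m ≤ l → m ≤ l' → Sat σ χ l ⊤ → Sat σ χ l' ⊤ := by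
  induction χ with
  | tt => intro l l' _ _ _; trivial
  | ff => intro l l' _ _ h; exact h.elim
  | atom e => intro l l' hl hl' h; simpa [Sat, hσ l' hl'] using (by simpa [Sat, hσ l hl] using h)
  | natom e => intro l l' hl hl' h; simpa [Sat, hσ l' hl'] using (by simpa [Sat, hσ l hl] using h)
  | and φ ψ ihφ ihψ =>
    rintro l l' hl hl' ⟨h1, h2⟩
    exact ⟨ihφ l l' hl hl' h1, ihψ l l' hl hl' h2⟩
  | or φ ψ ihφ ihψ =>
    rintro l l' hl hl' (h | h)
    · exact Or.inl (ihφ l l' hl hl' h)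
    · exact Or.inr (ihψ l l' hl hl' h)
  | next φ ih =>
    rintro l l' hl hl' ⟨-, h⟩
    exact ⟨by simp, ih (l + 1) (l' + 1) (by omega) (by omega) h⟩
  | untl φ ψ ihφ ihψ =>
    rintro l l' hl hl' ⟨l₀, -, hψ0, hall⟩
    by_cases h : l₀ ≤ l'
    · exact ⟨l₀, le_top, hψ0, fun k hk1 hk2 => absurd (lt_of_le_of_lt hk1 hk2) (by omega)⟩
    · push_neg at h
      exact ⟨l', le_top, ihψ l₀ l' (by omega) hl' hψ0,
        fun k hk1 hk2 => absurd (lt_of_le_of_lt hk1 hk2) (by omega)⟩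
  | glob φ ih =>
    rintro l l' hl hl' ⟨-, hall⟩
    refine ⟨rfl, fun k hk => ?_⟩
    exact ih (max l k) k (by omega) (by omega) (hall (max l k) (by omega))

lemma wordTrace_ge {P : Type} (u : List (Set P)) (k : ℕ) (h : u.length ≤ k) :
    wordTrace u k = ∅ :=
  List.getD_eq_default u ∅ h

/-- Reduce the unbounded until-witness to one within the word. -/
lemma sat_untl_top_iff {P : Type} (u : List (Set P)) (φ ψ : LTL P) (i : ℕ) :
    Sat (wordTrace u) (.untl φ ψ) i ⊤ ↔
      ∃ l, l ≤ u.length ∧ Sat (wordTrace u) ψ l ⊤ ∧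
        ∀ k, i ≤ k → k < l → Sat (wordTrace u) φ k ⊤ := by
  have hσ : ∀ k, u.length ≤ k → wordTrace u k = wordTrace u u.length := by
    intro k hk
    rw [wordTrace_ge u k hk, wordTrace_ge u u.length le_rfl]
  constructor
  · rintro ⟨l, -, hψ, hall⟩
    by_cases h : l ≤ u.length
    · exact ⟨l, h, hψ, fun k hk1 hk2 => hall k hk1 hk2⟩
    · push_neg at h
      refine ⟨u.length, le_rfl, sat_const ψ _ u.length hσ l u.length (by omega) le_rfl hψ,
        fun k hk1 hk2 => hall k hk1 (by omega)⟩
  · rintro ⟨l, -, hψ, hall⟩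
    exact ⟨l, le_top, hψ, hall⟩

lemma daUntil_accepts_iff (Mφ Mψ : DA (Set P × Bool)) (incl : Bool)
    (u : List (Set P)) (i : ℕ) :
    (daUntil Mφ Mψ incl).Accepts (markFrom u i) ↔
      ((∃ l, l < u.length ∧ (∀ k, i ≤ k → k < l → Mφ.Accepts (markFrom u k)) ∧
          Mψ.Accepts (markFrom u l)) ∨
       (incl = true ∧ (∀ k, i ≤ k → k < u.length → Mφ.Accepts (markFrom u k)) ∧
          Mψ.Accepts (markFrom u u.length))) := by
  rw [DA.Accepts, daUntil_run]
  show ((∃ z ∈ _, (_ : Set Mφ.Q) ⊆ _ ∧ _ ∈ _) ∨ _) ↔ _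
  constructor
  · rintro (⟨z, ⟨l, hl, rfl⟩, hsub, hmem⟩ | ⟨hincl, hsub, hmem⟩)
    · refine Or.inl ⟨l, hl, fun k hk1 hk2 => ?_, hmem⟩
      exact hsub ⟨k, ⟨hk1, hk2⟩, rfl⟩
    · refine Or.inr ⟨hincl, fun k hk1 hk2 => ?_, hmem⟩
      exact hsub ⟨k, ⟨hk1, hk2⟩, rfl⟩
  · rintro (⟨l, hl, hall, hmem⟩ | ⟨hincl, hall, hmem⟩)
    · refine Or.inl ⟨_, ⟨l, hl, rfl⟩, ?_, hmem⟩
      rintro q ⟨k, ⟨hk1, hk2⟩, rfl⟩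
      exact hall k hk1 hk2
    · refine Or.inr ⟨hincl, ?_, hmem⟩
      rintro q ⟨k, ⟨hk1, hk2⟩, rfl⟩
      exact hall k hk1 hk2

/-- The pair (infinite-bound machine, finite-bound machine) for a formula. -/
def auto {P : Type} : LTL P → DA (Set P × Bool) × DA (Set P × Bool)
  | .tt => (daTrue _, daTrue _)
  | .ff => (daFalse _, daFalse _)
  | .atom e => (daAtom e true, daAtom e true)
  | .natom e => (daAtom e false, daAtom e false)
  | .and φ ψ => (daProd (auto φ).1 (auto ψ).1 true, daProd (auto φ).2 (auto ψ).2 true)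
  | .or φ ψ => (daProd (auto φ).1 (auto ψ).1 false, daProd (auto φ).2 (auto ψ).2 false)
  | .next φ => (daNext (auto φ).1 false, daNext (auto φ).2 true)
  | .untl φ ψ => (daUntil (auto φ).1 (auto ψ).1 true, daUntil (auto φ).2 (auto ψ).1 false)
  | .glob _ => (daFalse _, daFalse _)

theorem auto_contract {P : Type} {φ : LTL P} (hφ : CoSafe φ) :
    ∀ (u : List (Set P)) (i : ℕ),
      (i ≤ u.length → ((auto φ).1.Accepts (markFrom u i) ↔ Sat (wordTrace u) φ i ⊤)) ∧
      (i < u.length → ((auto φ).2.Accepts (markFrom u i) ↔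
          Sat (wordTrace u) φ i ((u.length - 1 : ℕ) : ℕ∞))) := by
  induction hφ with
  | tt => intro u i; constructor <;> intro _ <;> simp [auto, Sat]
  | ff => intro u i; constructor <;> intro _ <;> simp [auto, Sat]
  | atom e =>
    intro u i
    have hrun : (daAtom (P := P) e true).Accepts (markFrom u i) ↔
        (i < u.length ∧ e ∈ wordTrace u i) := by
      rw [DA.Accepts, daAtom_run]
      by_cases h : i < u.length
      · simp only [if_pos h, daAtom, if_pos rfl, Set.mem_setOf_eq, Option.some_inj]
        constructor
        · rintro ⟨p, hp, h2⟩
          rw [Option.some_inj] at hp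
          exact ⟨h, show e ∈ wordTrace u i from hp.symm ▸ h2⟩
        · rintro ⟨-, h2⟩
          exact ⟨e ∈ wordTrace u i, rfl, h2⟩
      · simp only [if_neg h, daAtom, if_pos rfl, Set.mem_setOf_eq]
        simp [h]
        rintro ⟨p, hp, -⟩
        cases hp
    constructor
    · intro hi
      rw [show (auto (LTL.atom e)).1 = daAtom e true from rfl, hrun]
      by_cases h : i < u.length
      · simp [Sat, h]
      · have : wordTrace u i = ∅ := wordTrace_ge u i (by omega)
        simp [Sat, h, this]
    · intro hi
      rw [show (auto (LTL.atom e)).2 = daAtom e true from rfl, hrun]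
      simp [Sat, hi]
  | natom e =>
    intro u i
    have hrun : (daAtom (P := P) e false).Accepts (markFrom u i) ↔
        (i < u.length ∧ e ∉ wordTrace u i) ∨ (¬ i < u.length) := by
      rw [DA.Accepts, daAtom_run]
      by_cases h : i < u.length
      · simp only [if_pos h, daAtom, if_neg (by simp : ¬ false = true), Set.mem_setOf_eq,
          Option.some_inj]
        constructor
        · intro h2
          exact Or.inl ⟨h, h2 _ rfl⟩
        · rintro (⟨-, h2⟩ | h2)
          · intro p hp
            exact (Option.some_inj.mp hp) ▸ h2
          · exact absurd h h2
      · simp only [if_neg h, daAtom, if_neg (by simp : ¬ false = true), Set.mem_setOf_eq]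
        simp [h]
        exact fun p hp => by cases hp
    constructor
    · intro hi
      rw [show (auto (LTL.natom e)).1 = daAtom e false from rfl, hrun]
      by_cases h : i < u.length
      · simp [Sat, h]
      · have : wordTrace u i = ∅ := wordTrace_ge u i (by omega)
        simp [Sat, h, this]
    · intro hi
      rw [show (auto (LTL.natom e)).2 = daAtom e false from rfl, hrun]
      simp [Sat, hi]
  | and hφ' hψ' ihφ ihψ =>
    intro u i
    constructor
    · intro hi
      rw [show (auto (LTL.and _ _)).1 = daProd (auto _).1 (auto _).1 true from rfl,
        daProd_accepts, if_pos rfl]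
      exact (and_congr ((ihφ u i).1 hi) ((ihψ u i).1 hi))
    · intro hi
      rw [show (auto (LTL.and _ _)).2 = daProd (auto _).2 (auto _).2 true from rfl,
        daProd_accepts, if_pos rfl]
      exact (and_congr ((ihφ u i).2 hi) ((ihψ u i).2 hi))
  | or hφ' hψ' ihφ ihψ =>
    intro u i
    constructor
    · intro hi
      rw [show (auto (LTL.or _ _)).1 = daProd (auto _).1 (auto _).1 false from rfl,
        daProd_accepts, if_neg (by simp)]
      exact (or_congr ((ihφ u i).1 hi) ((ihψ u i).1 hi))
    · intro hi
      rw [show (auto (LTL.or _ _)).2 = daProd (auto _).2 (auto _).2 false from rfl,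
        daProd_accepts, if_neg (by simp)]
      exact (or_congr ((ihφ u i).2 hi) ((ihψ u i).2 hi))
  | next hφ' ih =>
    intro u i
    constructor
    · intro hi
      rw [show (auto (LTL.next _)).1 = daNext (auto _).1 false from rfl, daNext_accepts]
      simp only [Bool.false_eq_true, false_implies, and_true]
      by_cases h : i + 1 ≤ u.length
      · rw [(ih u (i + 1)).1 h]
        simp only [Sat]
        exact ⟨fun hs => ⟨by simp, hs⟩, fun hs => hs.2⟩
      · have hi' : i = u.length := by omega
        have hmm : markFrom u (i + 1) = markFrom u u.length := by
          rw [markFrom_of_ge u (i + 1) (by omega), markFrom_of_ge u u.length le_rfl]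
        rw [hmm, (ih u u.length).1 le_rfl]
        have hσ : ∀ k, u.length ≤ k → wordTrace u k = wordTrace u u.length := by
          intro k hk
          rw [wordTrace_ge u k hk, wordTrace_ge u u.length le_rfl]
        simp only [Sat]
        constructor
        · intro hs
          exact ⟨by simp, sat_const _ _ u.length hσ u.length (i + 1) le_rfl (by omega) hs⟩
        · rintro ⟨-, hs⟩
          exact sat_const _ _ u.length hσ (i + 1) u.length (by omega) le_rfl hs
    · intro hi
      rw [show (auto (LTL.next _)).2 = daNext (auto _).2 true from rfl, daNext_accepts]
      simp only [Sat]
      by_cases h : i + 1 < u.length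
      · rw [(ih u (i + 1)).2 h]
        constructor
        · rintro ⟨hs, -⟩
          exact ⟨by rw [Nat.cast_lt]; omega, hs⟩
        · rintro ⟨-, hs⟩
          exact ⟨hs, fun _ => h⟩
      · constructor
        · rintro ⟨-, habs⟩
          exact absurd (habs (by simp)) h
        · rintro ⟨hlt, -⟩
          rw [Nat.cast_lt] at hlt
          omega
  | untl hφ' hψ' ihφ ihψ =>
    intro u i
    constructor
    · intro hi
      rw [show (auto (LTL.untl _ _)).1 = daUntil (auto _).1 (auto _).1 true from rfl,
        daUntil_accepts_iff, sat_untl_top_iff]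
      constructor
      · rintro (⟨l, hl, hall, hmem⟩ | ⟨-, hall, hmem⟩)
        · exact ⟨l, by omega, ((ihψ u l).1 (by omega)).mp hmem,
            fun k hk1 hk2 => ((ihφ u k).1 (by omega)).mp (hall k hk1 hk2)⟩
        · exact ⟨u.length, le_rfl, ((ihψ u u.length).1 le_rfl).mp hmem,
            fun k hk1 hk2 => ((ihφ u k).1 (by omega)).mp (hall k hk1 hk2)⟩
      · rintro ⟨l, hl, hψs, hall⟩
        by_cases h : l < u.length
        · exact Or.inl ⟨l, h, fun k hk1 hk2 => ((ihφ u k).1 (by omega)).mpr (hall k hk1 hk2),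
            ((ihψ u l).1 (by omega)).mpr hψs⟩
        · have : l = u.length := by omega
          subst this
          exact Or.inr ⟨rfl, fun k hk1 hk2 => ((ihφ u k).1 (by omega)).mpr (hall k hk1 hk2),
            ((ihψ u u.length).1 le_rfl).mpr hψs⟩
    · intro hi
      rw [show (auto (LTL.untl _ _)).2 = daUntil (auto _).2 (auto _).1 false from rfl,
        daUntil_accepts_iff]
      simp only [Sat]
      constructor
      · rintro (⟨l, hl, hall, hmem⟩ | ⟨habs, -, -⟩)
        · refine ⟨l, ?_, ((ihψ u l).1 (by omega)).mp hmem,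
            fun k hk1 hk2 => ((ihφ u k).2 (by omega)).mp (hall k hk1 hk2)⟩
          rw [Nat.cast_le]
          omega
        · exact absurd habs (by simp)
      · rintro ⟨l, hl, hψs, hall⟩
        rw [Nat.cast_le] at hl
        refine Or.inl ⟨l, by omega, fun k hk1 hk2 => ((ihφ u k).2 (by omega)).mpr (hall k hk1 hk2),
          ((ihψ u l).1 (by omega)).mpr hψs⟩

lemma markFrom_zero {P : Type} (u : List (Set P)) :
    markFrom u 0 = u.map (fun a => (a, true)) := by
  simp [markFrom]


/-- For every co-safety LTL formula `φ` there is a deterministic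
finite automaton over `2^P` accepting exactly the nonempty finite words
`u = u_0 … u_n` whose segment `u_{0,n}` satisfies `φ`. -/
theorem cosafety_dfa_exists (P : Type) [Fintype P] (φ : LTL P)
    (hφ : CoSafe φ) :
    ∃ (Q : Type) (_ : Fintype Q) (q0 : Q) (δ : Q → Set P → Q) (Acc : Set Q),
      ∀ u : List (Set P),
        u.foldl δ q0 ∈ Acc ↔
          (u ≠ [] ∧ Sat (wordTrace u) φ 0 ((u.length - 1 : ℕ) : ℕ∞)) := by
  classical
  set M := (auto φ).2 with hM
  have hfin := M.fin
  refine ⟨Bool × M.Q, Fintype.ofFinite _, (false, M.q0),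
    fun q a => (true, M.δ q.2 (a, true)),
    {x | x.1 = true ∧ x.2 ∈ M.Acc}, ?_⟩
  intro u
  have key : ∀ (v : List (Set P)) (q : M.Q),
      v.foldl (fun q a => (true, M.δ q.2 (a, true))) (true, q)
        = (true, List.foldl M.δ q (v.map (fun a => (a, true)))) := by
    intro v
    induction v with
    | nil => intro q; simp
    | cons a v ih => intro q; simp [ih]
  cases u with
  | nil => simp [Sat]
  | cons a v =>
    have hfold : (a :: v).foldl (fun q x => (true, M.δ q.2 (x, true))) (false, M.q0)
        = (true, M.run (markFrom (a :: v) 0)) := by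
      show v.foldl _ (true, M.δ M.q0 (a, true)) = _
      rw [key v (M.δ M.q0 (a, true)), markFrom_zero]
      rfl
    rw [hfold]
    have hcontract := (auto_contract hφ (a :: v) 0).2 (by simp)
    simp only [Set.mem_setOf_eq, true_and]
    rw [show (M.run (markFrom (a :: v) 0) ∈ M.Acc) = M.Accepts (markFrom (a :: v) 0) from rfl]
    rw [hM, hcontract]
    simp
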